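/- arXiv:2604.03080 — 7 statements merged into one kernel-verified Lean document; each statement's English description precedes it below -/
import Mathlib

section
/- Fix distinct primes p₁, p₃, p₄ and let G = ℤ[1/p₁] and H = ℤ[1/p₃] as additive subgroups of ℚ. Then the group G ⊕ H fails condition K₂(b): there exists g ∈ p₁^ω(G ⊕ H) (namely (1,0)) such that for every positive integer k and every z ∈ p₃^ω(G ⊕ H), we have k·g + z ∉ p₄^ω(G ⊕ H). -/
/-- `g` is divisible by all powers of `p` inside the group `G`. -/
def DivSet (p : ℕ) (G : Type*) [AddCommGroup G] : Set G :=
  {g | ∀ n : ℕ, ∃ y : G, p ^ n • y = g}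

/-- `p^ω H`, computed inside the subgroup `H` of `G`. -/
def DivIn {G : Type*} [AddCommGroup G] (p : ℕ) (H : AddSubgroup G) : Set G :=
  {g | g ∈ H ∧ ∀ n : ℕ, ∃ y ∈ H, p ^ n • y = g}

/-- `H` is a pure subgroup of `G`: `nH = H ∩ nG` for all integers `n`. -/
def IsPure {G : Type*} [AddCommGroup G] (H : AddSubgroup G) : Prop :=
  ∀ (n : ℤ) (x : G), x ∈ H → (∃ g : G, n • g = x) → ∃ y ∈ H, n • y = x

/-- Condition K₁: `G = p₁^ω G` and `p^ω G = 0` for all primes `p ≠ p₁`. -/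
def K1 (p1 : ℕ) (G : Type*) [AddCommGroup G] : Prop :=
  (∀ g : G, g ∈ DivSet p1 G) ∧
  (∀ p : ℕ, p.Prime → p ≠ p1 → DivSet p G = {0})

/-- Conditions K₂(a) and K₂(b). -/
def K2 (p1 p3 p4 : ℕ) (G : Type*) [AddCommGroup G] : Prop :=
  (∀ g ∈ DivSet p1 G, ∀ z1 ∈ DivSet p3 G, ∀ z2 ∈ DivSet p3 G,
      g + z1 ∈ DivSet p4 G → g + z2 ∈ DivSet p4 G → z1 = z2) ∧
  (∀ g ∈ DivSet p1 G, ∃ k : ℕ, 0 < k ∧ ∃ z ∈ DivSet p3 G, k • g + z ∈ DivSet p4 G)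

/-- Conditions K₂(a) and K₂(b), relativized to a subgroup `H` of `G`. -/
def K2In (p1 p3 p4 : ℕ) {G : Type*} [AddCommGroup G] (H : AddSubgroup G) : Prop :=
  (∀ g ∈ DivIn p1 H, ∀ z1 ∈ DivIn p3 H, ∀ z2 ∈ DivIn p3 H,
      g + z1 ∈ DivIn p4 H → g + z2 ∈ DivIn p4 H → z1 = z2) ∧
  (∀ g ∈ DivIn p1 H, ∃ k : ℕ, 0 < k ∧ ∃ z ∈ DivIn p3 H, k • g + z ∈ DivIn p4 H)

/-- The additive subgroup `ℤ[1/p]` of `ℚ`, generated by `{1/p^n : n < ω}`. -/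
def ZInv (p : ℕ) : AddSubgroup ℚ :=
  AddSubgroup.closure {x : ℚ | ∃ n : ℕ, x = ((p : ℚ) ^ n)⁻¹}

lemma mem_zinv (p : ℕ) (a : ℤ) (n : ℕ) : ((a : ℚ) / (p:ℚ)^n) ∈ ZInv p := by
  have h : ((p:ℚ)^n)⁻¹ ∈ ZInv p := AddSubgroup.subset_closure ⟨n, rfl⟩
  simpa [div_eq_mul_inv, zsmul_eq_mul] using AddSubgroup.zsmul_mem _ h a

lemma zinv_rep {p : ℕ} (hp : (p:ℚ) ≠ 0) {x : ℚ} (hx : x ∈ ZInv p) :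
    ∃ (a : ℤ) (n : ℕ), x = (a : ℚ) / (p:ℚ)^n := by
  induction hx using AddSubgroup.closure_induction with
  | mem x hx =>
    obtain ⟨n, rfl⟩ := hx
    exact ⟨1, n, by rw [Int.cast_one, one_div]⟩
  | zero => exact ⟨0, 0, by simp⟩
  | add x y _ _ ihx ihy =>
    obtain ⟨a, m, rfl⟩ := ihx
    obtain ⟨b, n, rfl⟩ := ihy
    refine ⟨a * p^n + b * p^m, m + n, ?_⟩
    rw [div_add_div _ _ (pow_ne_zero m hp) (pow_ne_zero n hp), pow_add]
    congr 1
    push_cast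
    ring
  | neg x _ ih =>
    obtain ⟨a, m, rfl⟩ := ih
    exact ⟨-a, m, by push_cast; ring⟩

lemma key {p q : ℕ} (hp : p.Prime) (hq : q.Prime) (hpq : q ≠ p) {x : ℚ}
    (hx : x ∈ ZInv p) (h : ∀ n : ℕ, ∃ y ∈ ZInv p, (q:ℚ)^n * y = x) : x = 0 := by
  by_contra hx0
  have hpQ : (p:ℚ) ≠ 0 := Nat.cast_ne_zero.mpr hp.pos.ne'
  obtain ⟨a, m, rfl⟩ := zinv_rep hpQ hx
  have ha : a ≠ 0 := by
    rintro rfl; simp at hx0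
  -- choose n with q^n > |a|
  set n := a.natAbs
  obtain ⟨y, hy, hey⟩ := h n
  obtain ⟨b, l, rfl⟩ := zinv_rep hpQ hy
  -- integer equation: q^n * b * p^m = a * p^l
  have hint : (q:ℤ)^n * b * (p:ℤ)^m = a * (p:ℤ)^l := by
    have := hey
    field_simp at this
    rw [mul_comm a]; exact_mod_cast this
  have hdvd : (q:ℕ)^n ∣ (a * (p:ℤ)^l).natAbs := by
    rw [← hint]
    have : (q:ℤ)^n ∣ (q:ℤ)^n * b * (p:ℤ)^m := ⟨b * (p:ℤ)^m, by ring⟩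
    simpa [Int.natAbs_pow] using Int.natAbs_dvd_natAbs.mpr this
  rw [Int.natAbs_mul, Int.natAbs_pow] at hdvd
  have hcop : Nat.Coprime (q^n) (p^l) :=
    Nat.Coprime.pow _ _ ((Nat.coprime_primes hq hp).mpr hpq)
  have hdvd2 : q^n ∣ a.natAbs := hcop.dvd_of_dvd_mul_right (by simpa using hdvd)
  have hle : q^n ≤ a.natAbs := Nat.le_of_dvd (Int.natAbs_pos.mpr ha) hdvd2
  have : a.natAbs < q ^ n := Nat.lt_pow_self hq.one_lt
  omega

lemma coe_nsmul {H : AddSubgroup ℚ} (n : ℕ) (y : H) : ((n • y : H) : ℚ) = n * (y : ℚ) := by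
  rw [AddSubmonoidClass.coe_nsmul, nsmul_eq_mul]

theorem stmt9 (p1 p3 p4 : ℕ) (hp1 : p1.Prime) (hp3 : p3.Prime) (hp4 : p4.Prime)
    (h13 : p1 ≠ p3) (h14 : p1 ≠ p4) (h34 : p3 ≠ p4) :
    ∃ g : ↥(ZInv p1) × ↥(ZInv p3),
      (g.1 : ℚ) = 1 ∧ (g.2 : ℚ) = 0 ∧
      g ∈ DivSet p1 (↥(ZInv p1) × ↥(ZInv p3)) ∧
      ∀ k : ℕ, 0 < k → ∀ z ∈ DivSet p3 (↥(ZInv p1) × ↥(ZInv p3)),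
        k • g + z ∉ DivSet p4 (↥(ZInv p1) × ↥(ZInv p3)) := by
  have hp1Q : (p1:ℚ) ≠ 0 := Nat.cast_ne_zero.mpr hp1.pos.ne'
  have h1 : (1:ℚ) ∈ ZInv p1 := by simpa using mem_zinv p1 1 0
  refine ⟨(⟨1, h1⟩, 0), rfl, rfl, ?_, ?_⟩
  · intro n
    refine ⟨(⟨(1:ℚ)/(p1:ℚ)^n, by simpa using mem_zinv p1 1 n⟩, 0), ?_⟩
    refine Prod.ext ?_ (by simp)
    apply Subtype.ext
    rw [Prod.fst]
    show ((p1^n • (⟨(1:ℚ)/(p1:ℚ)^n, _⟩ : ZInv p1) : ZInv p1) : ℚ) = 1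
    rw [coe_nsmul]
    push_cast
    field_simp
  · intro k hk z hz hcon
    -- first component of z is 0
    have hz1 : (z.1 : ℚ) = 0 := by
      apply key hp1 hp3 h13.symm z.1.2
      intro n
      obtain ⟨y, hy⟩ := hz n
      refine ⟨(y.1 : ℚ), y.1.2, ?_⟩
      have := congrArg (fun w => ((Prod.fst w : ZInv p1) : ℚ)) hy
      simp only [Prod.smul_fst] at this
      rw [coe_nsmul] at this
      push_cast at this
      convert this using 2
    -- first component of k • g + z is k
    have hk1 : (((k • ((⟨1, h1⟩ : ZInv p1), (0 : ZInv p3)) + z).1 : ZInv p1) : ℚ) = (k : ℚ) := by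
      simp only [Prod.fst_add, Prod.smul_fst, AddSubgroup.coe_add, coe_nsmul, hz1]
      simp
    have := key hp1 hp4 h14.symm (x := ((k:ℚ))) (by simpa using mem_zinv p1 k 0) ?_
    · exact (Nat.cast_ne_zero.mpr hk.ne').elim (by exact_mod_cast this)
    · intro n
      obtain ⟨y, hy⟩ := hcon n
      refine ⟨(y.1 : ℚ), y.1.2, ?_⟩
      have h2 := congrArg (fun w => ((Prod.fst w : ZInv p1) : ℚ)) hy
      simp only [Prod.smul_fst] at h2
      rw [coe_nsmul] at h2
      push_cast at h2
      rw [hk1] at h2  -- may fail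
      convert h2 using 2
end

section
/- Fix distinct primes p₁, p₃, p₄ and let K₂ be the class of torsion-free abelian groups satisfying conditions (a) and (b) as below. Let (G_i)_{i<δ} be an increasing chain of subgroups of a torsion-free abelian group, indexed by a linear order (or ordinal δ), such that each G_i is pure in G_δ := ⋃_{i<δ} G_i and each G_i ∈ K₂. Then G_δ ∈ K₂. -/
/-! Each of the finitely many elements occurring in an instance of K₂(a) or K₂(b) lies in a
single `Gᵢ`, and purity makes `p^ω Gᵢ = Gᵢ ∩ p^ω G`, so the condition in `G` is the same
condition in `Gᵢ ∈ K₂`. -/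

theorem AddMonoidHom.map_mem_divSet {G H : Type*} [AddCommGroup G] [AddCommGroup H]
    (f : G →+ H) {p : ℕ} {g : G} (hg : g ∈ DivSet p G) : f g ∈ DivSet p H := fun n => by
  obtain ⟨y, rfl⟩ := hg n
  exact ⟨f y, (map_nsmul f _ y).symm⟩

section Pure

variable {G : Type*} [AddCommGroup G] {H : AddSubgroup G}

theorem IsPure.mem_divSet_iff (hH : IsPure H) {p : ℕ} (h : H) :
    h ∈ DivSet p H ↔ (h : G) ∈ DivSet p G := by
  refine ⟨H.subtype.map_mem_divSet, fun hd n => ?_⟩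
  obtain ⟨y, hy⟩ := hd n
  obtain ⟨w, hwH, hw⟩ := hH ((p ^ n : ℕ) : ℤ) h h.2 ⟨y, by rwa [natCast_zsmul]⟩
  rw [natCast_zsmul] at hw
  exact ⟨⟨w, hwH⟩, Subtype.ext hw⟩

variable {p1 p3 p4 : ℕ}

theorem K2.eq_of_isPure (hK : K2 p1 p3 p4 H) (hH : IsPure H) {g z1 z2 : G}
    (hg : g ∈ H) (hz1 : z1 ∈ H) (hz2 : z2 ∈ H) (hgd : g ∈ DivSet p1 G)
    (hz1d : z1 ∈ DivSet p3 G) (hz2d : z2 ∈ DivSet p3 G)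
    (h1 : g + z1 ∈ DivSet p4 G) (h2 : g + z2 ∈ DivSet p4 G) : z1 = z2 :=
  congrArg Subtype.val <| hK.1 ⟨g, hg⟩ ((hH.mem_divSet_iff _).2 hgd)
    ⟨z1, hz1⟩ ((hH.mem_divSet_iff _).2 hz1d) ⟨z2, hz2⟩ ((hH.mem_divSet_iff _).2 hz2d)
    ((hH.mem_divSet_iff _).2 h1) ((hH.mem_divSet_iff _).2 h2)

theorem K2.exists_of_isPure (hK : K2 p1 p3 p4 H) (hH : IsPure H) {g : G} (hg : g ∈ H)
    (hgd : g ∈ DivSet p1 G) :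
    ∃ k : ℕ, 0 < k ∧ ∃ z ∈ DivSet p3 G, k • g + z ∈ DivSet p4 G := by
  obtain ⟨k, hk, z, hz, hkz⟩ := hK.2 ⟨g, hg⟩ ((hH.mem_divSet_iff _).2 hgd)
  exact ⟨k, hk, z, H.subtype.map_mem_divSet hz, H.subtype.map_mem_divSet hkz⟩

end Pure

theorem Monotone.exists_forall_mem {G δ ι : Type*} [AddCommGroup G]
    [Preorder δ] [IsDirectedOrder δ] [Finite ι] {Gi : δ → AddSubgroup G} (hmono : Monotone Gi)
    (hunion : ∀ g : G, ∃ i, g ∈ Gi i) (x : ι → G) : ∃ i, ∀ j, x j ∈ Gi i := by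
  choose idx hidx using hunion
  have : Nonempty δ := ⟨idx 0⟩
  obtain ⟨i, hi⟩ := Finite.exists_le (idx ∘ x)
  exact ⟨i, fun j => hmono (hi j) (hidx (x j))⟩

theorem stmt10_general {G : Type*} [AddCommGroup G]
    (p1 p3 p4 : ℕ)
    {δ : Type*} [LinearOrder δ]
    (Gi : δ → AddSubgroup G) (hmono : Monotone Gi)
    (hunion : ∀ g : G, ∃ i, g ∈ Gi i)
    (hpure : ∀ i, IsPure (Gi i))
    (hK2 : ∀ i, K2 p1 p3 p4 ↥(Gi i)) :
    K2 p1 p3 p4 G := by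
  refine ⟨fun g hg z1 hz1 z2 hz2 h1 h2 => ?_, fun g hg => ?_⟩
  · obtain ⟨i, hi⟩ := hmono.exists_forall_mem hunion ![g, z1, z2]
    exact (hK2 i).eq_of_isPure (hpure i) (hi 0) (hi 1) (hi 2) hg hz1 hz2 h1 h2
  · obtain ⟨i, hi⟩ := hunion g
    exact (hK2 i).exists_of_isPure (hpure i) hi hg

theorem stmt10 {G : Type*} [AddCommGroup G] [NoZeroSMulDivisors ℤ G]
    (p1 p3 p4 : ℕ) (hp1 : p1.Prime) (hp3 : p3.Prime) (hp4 : p4.Prime)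
    (h13 : p1 ≠ p3) (h14 : p1 ≠ p4) (h34 : p3 ≠ p4)
    {δ : Type*} [LinearOrder δ]
    (Gi : δ → AddSubgroup G) (hmono : Monotone Gi)
    (hunion : ∀ g : G, ∃ i, g ∈ Gi i)
    (hpure : ∀ i, IsPure (Gi i))
    (hK2 : ∀ i, K2 p1 p3 p4 ↥(Gi i)) :
    K2 p1 p3 p4 G :=
  stmt10_general p1 p3 p4 Gi hmono hunion hpure hK2
end

section
/- Let λ be an index type, and inside the ℚ-vector space M = (⊕_{α∈λ} ℚ x_α) ⊕ (⊕_{α∈λ} ℚ z_α) (direct sum of copies of ℚ indexed by two disjoint copies of λ, with standard basis vectors x_α, z_α), fix distinct primes p₁, p₃, p₄, p₅ and a subset U ⊆ λ. Let G_U be the additive subgroup of M generated by {p₁^{-n} x_α, p₃^{-n} z_α, p₄^{-n}(x_α + z_α) : n < ω, α ∈ λ} ∪ {p₅^{-n} z_β : n < ω, β ∈ U}. Then p₁^ω G_U equals the subgroup generated by {p₁^{-n} x_α : n < ω, α ∈ λ}. -/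
/-- The ℚ-vector space `M = (⊕_{α∈λ} ℚ x_α) ⊕ (⊕_{α∈λ} ℚ z_α)`. -/
abbrev Msp (lam : Type*) := (lam →₀ ℚ) × (lam →₀ ℚ)

/-- The basis vector `x_α`. -/
noncomputable def xv {lam : Type*} (α : lam) : Msp lam := (Finsupp.single α 1, 0)

/-- The basis vector `z_α`. -/
noncomputable def zv {lam : Type*} (α : lam) : Msp lam := (0, Finsupp.single α 1)

/-- The subgroup `G_U` of `M`, generated by
`{p₁⁻ⁿ x_α, p₃⁻ⁿ z_α, p₄⁻ⁿ (x_α + z_α) : n < ω, α ∈ λ} ∪ {p₅⁻ⁿ z_β : n < ω, β ∈ U}`. -/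
noncomputable def GU {lam : Type*} (p1 p3 p4 p5 : ℕ) (U : Set lam) : AddSubgroup (Msp lam) :=
  AddSubgroup.closure
    ({m | ∃ n : ℕ, ∃ α : lam, m = ((p1 : ℚ) ^ n)⁻¹ • xv α} ∪
     {m | ∃ n : ℕ, ∃ α : lam, m = ((p3 : ℚ) ^ n)⁻¹ • zv α} ∪
     {m | ∃ n : ℕ, ∃ α : lam, m = ((p4 : ℚ) ^ n)⁻¹ • (xv α + zv α)} ∪
     {m | ∃ n : ℕ, ∃ β ∈ U, m = ((p5 : ℚ) ^ n)⁻¹ • zv β})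

/-- The subgroup `G_λ` of `M`, generated by `{p₁⁻ⁿ x_α : n < ω, α ∈ λ}`. -/
noncomputable def Glam (lam : Type*) (p1 : ℕ) : AddSubgroup (Msp lam) :=
  AddSubgroup.closure {m | ∃ n : ℕ, ∃ α : lam, m = ((p1 : ℚ) ^ n)⁻¹ • xv α}

namespace Stmt14Aux

def LocP (S : Set ℕ) : Set ℚ := {q | ∀ ℓ : ℕ, ℓ.Prime → ℓ ∣ q.den → ℓ ∈ S}

lemma mem_locP_of_den_one {S : Set ℕ} {q : ℚ} (h : q.den = 1) : q ∈ LocP S := by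
  intro ℓ hℓ hd
  rw [h] at hd
  exact absurd (Nat.dvd_one.mp hd) hℓ.ne_one

lemma locP_zero (S : Set ℕ) : (0 : ℚ) ∈ LocP S := mem_locP_of_den_one rfl

lemma locP_add {S : Set ℕ} {a b : ℚ} (ha : a ∈ LocP S) (hb : b ∈ LocP S) :
    a + b ∈ LocP S := by
  intro ℓ hℓ hd
  rcases (Nat.Prime.dvd_mul hℓ).mp (hd.trans (Rat.add_den_dvd a b)) with h | h
  · exact ha ℓ hℓ h
  · exact hb ℓ hℓ h

lemma locP_neg {S : Set ℕ} {a : ℚ} (ha : a ∈ LocP S) : -a ∈ LocP S := by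
  intro ℓ hℓ hd
  rw [Rat.neg_den] at hd
  exact ha ℓ hℓ hd

lemma locP_mono {S T : Set ℕ} (h : S ⊆ T) {a : ℚ} (ha : a ∈ LocP S) : a ∈ LocP T :=
  fun ℓ hℓ hd => h (ha ℓ hℓ hd)

lemma inv_pow_mem {p : ℕ} (hp : p.Prime) (n : ℕ) : ((p : ℚ) ^ n)⁻¹ ∈ LocP {p} := by
  intro ℓ hℓ hd
  have hpos : 0 < p ^ n := pow_pos hp.pos n
  rw [show ((p : ℚ) ^ n) = ((p ^ n : ℕ) : ℚ) by push_cast; ring,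
    Rat.inv_natCast_den_of_pos hpos] at hd
  exact Set.mem_singleton_iff.mpr <|
    (Nat.prime_dvd_prime_iff_eq hℓ hp).mp (hℓ.dvd_of_dvd_pow hd)

/-- per-coordinate shape of elements of `G_U`. -/
def coordP (p1 p3 p4 p5 : ℕ) (inU : Prop) (a b : ℚ) : Prop :=
  ∃ w : ℚ, w ∈ LocP {p4} ∧ (a - w) ∈ LocP {p1} ∧
    (b - w) ∈ LocP {ℓ | ℓ = p3 ∨ (ℓ = p5 ∧ inU)}

noncomputable def bigSet (lam : Type*) (p1 p3 p4 p5 : ℕ) (U : Set lam) : AddSubgroup (Msp lam) where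
  carrier := {m | ∀ α : lam, coordP p1 p3 p4 p5 (α ∈ U) (m.1 α) (m.2 α)}
  zero_mem' := fun α => ⟨0, locP_zero _, by simpa using locP_zero _, by simpa using locP_zero _⟩
  add_mem' := by
    intro x y hx hy α
    obtain ⟨w1, h1, h2, h3⟩ := hx α
    obtain ⟨w2, g1, g2, g3⟩ := hy α
    refine ⟨w1 + w2, locP_add h1 g1, ?_, ?_⟩
    · have e : (x + y).1 α - (w1 + w2) = (x.1 α - w1) + (y.1 α - w2) := by
        show (x.1 + y.1) α - _ = _
        rw [Finsupp.add_apply]; ring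
      rw [e]; exact locP_add h2 g2
    · have e : (x + y).2 α - (w1 + w2) = (x.2 α - w1) + (y.2 α - w2) := by
        show (x.2 + y.2) α - _ = _
        rw [Finsupp.add_apply]; ring
      rw [e]; exact locP_add h3 g3
  neg_mem' := by
    intro x hx α
    obtain ⟨w, h1, h2, h3⟩ := hx α
    refine ⟨-w, locP_neg h1, ?_, ?_⟩
    · have e : (-x).1 α - (-w) = -(x.1 α - w) := by
        show (-x.1) α - _ = _
        rw [Finsupp.neg_apply]; ring
      rw [e]; exact locP_neg h2
    · have e : (-x).2 α - (-w) = -(x.2 α - w) := by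
        show (-x.2) α - _ = _
        rw [Finsupp.neg_apply]; ring
      rw [e]; exact locP_neg h3

lemma GU_le_bigSet {lam : Type*} (p1 p3 p4 p5 : ℕ)
    (hp1 : p1.Prime) (hp3 : p3.Prime) (hp4 : p4.Prime) (hp5 : p5.Prime) (U : Set lam) :
    GU p1 p3 p4 p5 U ≤ bigSet lam p1 p3 p4 p5 U := by
  rw [GU]
  apply (AddSubgroup.closure_le _).mpr
  rintro m ((((⟨n, α, rfl⟩ | ⟨n, α, rfl⟩) | ⟨n, α, rfl⟩) | ⟨n, β, hβ, rfl⟩)) γ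
  · refine ⟨0, locP_zero _, ?_, ?_⟩
    · rw [sub_zero]
      rcases eq_or_ne α γ with rfl | hne
      · have e : ((((p1 : ℚ) ^ n)⁻¹ • xv α).1 α) = ((p1 : ℚ) ^ n)⁻¹ := by
          simp [xv, Finsupp.smul_apply]
        rw [e]; exact inv_pow_mem hp1 n
      · have e : ((((p1 : ℚ) ^ n)⁻¹ • xv α).1 γ) = 0 := by
          simp [xv, Finsupp.smul_apply, Finsupp.single_eq_of_ne' hne]
        rw [e]; exact locP_zero _
    · have e : ((((p1 : ℚ) ^ n)⁻¹ • xv α).2 γ) = 0 := by simp [xv]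
      rw [e, sub_zero]; exact locP_zero _
  · refine ⟨0, locP_zero _, ?_, ?_⟩
    · have e : ((((p3 : ℚ) ^ n)⁻¹ • zv α).1 γ) = 0 := by simp [zv]
      rw [e, sub_zero]; exact locP_zero _
    · rw [sub_zero]
      rcases eq_or_ne α γ with rfl | hne
      · have e : ((((p3 : ℚ) ^ n)⁻¹ • zv α).2 α) = ((p3 : ℚ) ^ n)⁻¹ := by
          simp [zv, Finsupp.smul_apply]
        rw [e]; exact locP_mono (fun ℓ hℓ => Or.inl hℓ) (inv_pow_mem hp3 n)
      · have e : ((((p3 : ℚ) ^ n)⁻¹ • zv α).2 γ) = 0 := by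
          simp [zv, Finsupp.smul_apply, Finsupp.single_eq_of_ne' hne]
        rw [e]; exact locP_zero _
  · rcases eq_or_ne α γ with rfl | hne
    · refine ⟨((p4 : ℚ) ^ n)⁻¹, inv_pow_mem hp4 n, ?_, ?_⟩
      · have e : ((((p4 : ℚ) ^ n)⁻¹ • (xv α + zv α)).1 α) = ((p4 : ℚ) ^ n)⁻¹ := by
          simp [xv, zv, Finsupp.smul_apply]
        rw [e, sub_self]; exact locP_zero _
      · have e : ((((p4 : ℚ) ^ n)⁻¹ • (xv α + zv α)).2 α) = ((p4 : ℚ) ^ n)⁻¹ := by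
          simp [xv, zv, Finsupp.smul_apply]
        rw [e, sub_self]; exact locP_zero _
    · refine ⟨0, locP_zero _, ?_, ?_⟩
      · have e : ((((p4 : ℚ) ^ n)⁻¹ • (xv α + zv α)).1 γ) = 0 := by
          simp [xv, zv, Finsupp.smul_apply, Finsupp.single_eq_of_ne' hne]
        rw [e, sub_zero]; exact locP_zero _
      · have e : ((((p4 : ℚ) ^ n)⁻¹ • (xv α + zv α)).2 γ) = 0 := by
          simp [xv, zv, Finsupp.smul_apply, Finsupp.single_eq_of_ne' hne]
        rw [e, sub_zero]; exact locP_zero _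
  · refine ⟨0, locP_zero _, ?_, ?_⟩
    · have e : ((((p5 : ℚ) ^ n)⁻¹ • zv β).1 γ) = 0 := by simp [zv]
      rw [e, sub_zero]; exact locP_zero _
    · rw [sub_zero]
      rcases eq_or_ne β γ with rfl | hne
      · have e : ((((p5 : ℚ) ^ n)⁻¹ • zv β).2 β) = ((p5 : ℚ) ^ n)⁻¹ := by
          simp [zv, Finsupp.smul_apply]
        rw [e]; exact locP_mono (fun ℓ hℓ => Or.inr ⟨hℓ, hβ⟩) (inv_pow_mem hp5 n)
      · have e : ((((p5 : ℚ) ^ n)⁻¹ • zv β).2 γ) = 0 := by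
          simp [zv, Finsupp.smul_apply, Finsupp.single_eq_of_ne' hne]
        rw [e]; exact locP_zero _

lemma rat_zero_of_div (p : ℕ) (hp : p.Prime) (b : ℚ)
    (h : ∀ n : ℕ, ∃ c : ℚ, ¬ p ∣ c.den ∧ (p : ℚ) ^ n * c = b) : b = 0 := by
  by_contra hb
  set N := b.num.natAbs with hN
  have hN0 : N ≠ 0 := by
    simpa [hN, Int.natAbs_eq_zero, Rat.num_eq_zero] using hb
  obtain ⟨c, hc, he⟩ := h N
  have hbden : ((b.den : ℚ)) ≠ 0 := by exact_mod_cast b.den_nz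
  have hcden : ((c.den : ℚ)) ≠ 0 := by exact_mod_cast c.den_nz
  have h1 : (b.num : ℚ) = b * b.den := by
    rw [Rat.mul_den_eq_num]
  have h2 : (c.num : ℚ) = c * c.den := by
    rw [Rat.mul_den_eq_num]
  have hQ : ((b.num * c.den : ℤ) : ℚ) = (((p : ℤ) ^ N * (c.num * b.den) : ℤ) : ℚ) := by
    push_cast
    rw [h1, h2, ← he]; ring
  have hZ : b.num * c.den = (p : ℤ) ^ N * (c.num * b.den) := by exact_mod_cast hQ
  have key : (p : ℤ) ^ N ∣ b.num * (c.den : ℤ) := ⟨c.num * b.den, hZ⟩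
  have keyN : p ^ N ∣ b.num.natAbs * c.den := by
    have := Int.natAbs_dvd_natAbs.mpr key
    simpa [Int.natAbs_mul, Int.natAbs_pow] using this
  have hcop : Nat.Coprime (p ^ N) c.den :=
    Nat.Coprime.pow_left _ ((Nat.Prime.coprime_iff_not_dvd hp).mpr hc)
  have hdvd : p ^ N ∣ N := hcop.dvd_of_dvd_mul_right keyN
  have hle : p ^ N ≤ N := Nat.le_of_dvd (Nat.pos_of_ne_zero hN0) hdvd
  exact absurd (Nat.lt_pow_self (n := N) hp.one_lt) (not_lt.mpr hle)

lemma not_dvd_den_add {p : ℕ} (hp : p.Prime) {S T : Set ℕ} {u v : ℚ}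
    (hu : u ∈ LocP S) (hv : v ∈ LocP T) (hpS : p ∉ S) (hpT : p ∉ T) :
    ¬ p ∣ (u + v).den := by
  intro hd
  rcases (Nat.Prime.dvd_mul hp).mp (hd.trans (Rat.add_den_dvd u v)) with h | h
  · exact hpS (hu p hp h)
  · exact hpT (hv p hp h)

lemma smul_xv_mem {lam : Type*} {p1 : ℕ} (hp1 : p1.Prime) {q : ℚ}
    (hq : q ∈ LocP {p1}) (α : lam) : q • xv α ∈ Glam lam p1 := by
  have hden : q.den = p1 ^ q.den.primeFactorsList.length :=
    Nat.eq_prime_pow_of_unique_prime_dvd q.den_nz (fun {d} hd hdvd => hq d hd hdvd)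
  set k := q.den.primeFactorsList.length with hk
  have hq' : q = (q.num : ℚ) * ((p1 : ℚ) ^ k)⁻¹ := by
    conv_lhs => rw [← Rat.num_div_den q]
    rw [hden]
    push_cast
    rw [div_eq_mul_inv]
  have e : q • xv α = q.num • (((p1 : ℚ) ^ k)⁻¹ • xv α) := by
    rw [← Int.cast_smul_eq_zsmul ℚ, smul_smul, ← hq']
  have hgen : ((p1 : ℚ) ^ k)⁻¹ • xv α ∈ Glam lam p1 :=
    AddSubgroup.subset_closure ⟨k, α, rfl⟩
  rw [e]
  exact zsmul_mem hgen _

lemma inv_smul_mem_Glam {lam : Type*} (p1 : ℕ) (n : ℕ) {m : Msp lam}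
    (hm : m ∈ Glam lam p1) : ((p1 : ℚ) ^ n)⁻¹ • m ∈ Glam lam p1 := by
  refine AddSubgroup.closure_induction
    (p := fun g _ => ((p1 : ℚ) ^ n)⁻¹ • g ∈ Glam lam p1) ?_ ?_ ?_ ?_ hm
  · rintro x ⟨k, α, rfl⟩
    refine AddSubgroup.subset_closure ⟨n + k, α, ?_⟩
    rw [smul_smul, ← mul_inv, ← pow_add]
  · simpa using zero_mem (Glam lam p1)
  · intro x y _ _ hx hy
    rw [smul_add]; exact add_mem hx hy
  · intro x _ hx
    rw [smul_neg]; exact neg_mem hx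

lemma Glam_le_GU {lam : Type*} (p1 p3 p4 p5 : ℕ) (U : Set lam) :
    Glam lam p1 ≤ GU p1 p3 p4 p5 U :=
  AddSubgroup.closure_mono (fun x hx =>
    Set.mem_union_left _ (Set.mem_union_left _ (Set.mem_union_left _ hx)))

end Stmt14Aux

theorem stmt14 (lam : Type*) (p1 p3 p4 p5 : ℕ)
    (hp1 : p1.Prime) (hp3 : p3.Prime) (hp4 : p4.Prime) (hp5 : p5.Prime)
    (h13 : p1 ≠ p3) (h14 : p1 ≠ p4) (h15 : p1 ≠ p5)
    (h34 : p3 ≠ p4) (h35 : p3 ≠ p5) (h45 : p4 ≠ p5)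
    (U : Set lam) :
    DivIn p1 (GU p1 p3 p4 p5 U) = ↑(Glam lam p1) := by
  open Stmt14Aux in
  ext m
  simp only [DivIn, Set.mem_setOf_eq, SetLike.mem_coe]
  constructor
  · rintro ⟨hmG, hdiv⟩
    have S35def : ∀ α : lam, p1 ∉ {ℓ : ℕ | ℓ = p3 ∨ (ℓ = p5 ∧ α ∈ U)} := by
      rintro α (h | ⟨h, -⟩)
      exacts [h13 h, h15 h]
    have hp14 : p1 ∉ ({p4} : Set ℕ) := fun h => h14 h
    -- `m.2 = 0`
    have hm2 : ∀ α : lam, m.2 α = 0 := by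
      intro α
      apply rat_zero_of_div p1 hp1
      intro n
      obtain ⟨y, hyG, hy⟩ := hdiv n
      obtain ⟨w, hw4, -, hw35⟩ := GU_le_bigSet p1 p3 p4 p5 hp1 hp3 hp4 hp5 U hyG α
      refine ⟨y.2 α, ?_, ?_⟩
      · have e : y.2 α = (y.2 α - w) + w := by ring
        rw [e]
        exact not_dvd_den_add hp1 hw35 hw4 (S35def α) hp14
      · have hφ := congrArg
          ((Finsupp.applyAddHom α).comp (AddMonoidHom.snd (lam →₀ ℚ) (lam →₀ ℚ))) hy
        rw [AddMonoidHom.map_nsmul] at hφ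
        have e2 : (p1 : ℚ) ^ n * y.2 α = (p1 ^ n) •
            ((Finsupp.applyAddHom α).comp (AddMonoidHom.snd (lam →₀ ℚ) (lam →₀ ℚ))) y := by
          rw [← Nat.cast_smul_eq_nsmul ℚ, smul_eq_mul]
          push_cast
          rfl
        rw [e2]
        exact hφ
    -- m.1 coefficients are p1-local
    have hms : ∀ α : lam, m.1 α ∈ LocP {p1} := by
      intro α
      obtain ⟨w, hw4, hw1, hw35⟩ := GU_le_bigSet p1 p3 p4 p5 hp1 hp3 hp4 hp5 U hmG α
      have hwneg : -w ∈ LocP {ℓ : ℕ | ℓ = p3 ∨ (ℓ = p5 ∧ α ∈ U)} := by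
        have e : m.2 α - w = -w := by rw [hm2 α]; ring
        rw [← e]; exact hw35
      have hw35' : w ∈ LocP {ℓ : ℕ | ℓ = p3 ∨ (ℓ = p5 ∧ α ∈ U)} := by
        have := locP_neg hwneg
        simpa using this
      have hwden : w.den = 1 := by
        by_contra h
        obtain ⟨ℓ, hℓ, hdvd⟩ := Nat.exists_prime_and_dvd h
        have h4 : ℓ = p4 := hw4 ℓ hℓ hdvd
        rcases hw35' ℓ hℓ hdvd with h3 | ⟨h5, -⟩
        · exact h34 (h3.symm.trans h4)
        · exact h45 (h4.symm.trans h5)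
      have hw1' : w ∈ LocP {p1} := mem_locP_of_den_one hwden
      have := locP_add hw1 hw1'
      have e : m.1 α - w + w = m.1 α := by ring
      rwa [e] at this
    -- assemble m as a sum of x-basis multiples
    have hrep : m = ∑ α ∈ m.1.support, (m.1 α) • xv α := by
      have hterm : ∀ α : lam, (m.1 α) • xv α = ((Finsupp.single α (m.1 α), 0) : Msp lam) := by
        intro α
        show ((m.1 α) • Finsupp.single α 1, (m.1 α) • (0 : lam →₀ ℚ)) = _
        rw [Finsupp.smul_single', mul_one, smul_zero]
      rw [Finset.sum_congr rfl (fun α _ => hterm α)]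
      have h1 : (∑ α ∈ m.1.support, ((Finsupp.single α (m.1 α), 0) : Msp lam)).1
          = ∑ α ∈ m.1.support, Finsupp.single α (m.1 α) :=
        map_sum (AddMonoidHom.fst _ _) _ _
      have h2 : (∑ α ∈ m.1.support, ((Finsupp.single α (m.1 α), 0) : Msp lam)).2
          = (0 : lam →₀ ℚ) := by
        refine (map_sum (AddMonoidHom.snd (lam →₀ ℚ) (lam →₀ ℚ)) _ m.1.support).trans ?_
        simp
      refine Prod.ext ?_ ?_
      · rw [h1]
        exact (Finsupp.sum_single m.1).symm
      · rw [h2]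
        ext α
        simpa using hm2 α
    rw [hrep]
    exact sum_mem (fun α _ => smul_xv_mem hp1 (hms α) α)
  · intro h
    refine ⟨Glam_le_GU p1 p3 p4 p5 U h, fun n => ⟨((p1 : ℚ) ^ n)⁻¹ • m,
      Glam_le_GU p1 p3 p4 p5 U (inv_smul_mem_Glam p1 n h), ?_⟩⟩
    have hne : ((p1 : ℚ) ^ n) ≠ 0 :=
      pow_ne_zero _ (Nat.cast_ne_zero.mpr hp1.pos.ne')
    rw [← Nat.cast_smul_eq_nsmul ℚ (p1 ^ n), smul_smul]
    push_cast
    rw [mul_inv_cancel₀ hne, one_smul]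
end

section
/- With M, x_α, z_α, distinct primes p₁, p₃, p₄, p₅, U ⊆ λ, and G_U defined as the subgroup of M = (⊕_{α∈λ} ℚ x_α) ⊕ (⊕_{α∈λ} ℚ z_α) generated by {p₁^{-n} x_α, p₃^{-n} z_α, p₄^{-n}(x_α+z_α), p₅^{-n} z_β : n < ω, α ∈ λ, β ∈ U}, one has p₃^ω G_U ∩ p₄^ω G_U = 0. -/
/-- The additive subgroup of rationals with `p`-adic norm at most 1. -/
def padA (p : ℕ) [Fact p.Prime] : AddSubgroup ℚ where
  carrier := {x | padicNorm p x ≤ 1}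
  zero_mem' := by simp [Set.mem_setOf_eq, padicNorm.zero]
  add_mem' := fun ha hb => padicNorm.nonarchimedean.trans (max_le ha hb)
  neg_mem' := by intro x hx; simpa [Set.mem_setOf_eq, padicNorm.neg] using hx

lemma pn_pow {p : ℕ} [Fact p.Prime] (x : ℚ) (n : ℕ) :
    padicNorm p (x ^ n) = padicNorm p x ^ n := by
  induction n with
  | zero => simp [padicNorm.one]
  | succ n ih => rw [pow_succ, pow_succ, padicNorm.mul, ih]

lemma pn_pow_inv {p q : ℕ} [hp : Fact p.Prime] [hq : Fact q.Prime] (h : p ≠ q) (n : ℕ) :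
    padicNorm p (((q : ℚ) ^ n)⁻¹) = 1 := by
  have h1 : padicNorm p ((q : ℚ) ^ n) = 1 := by
    have e : ((q : ℚ) ^ n) = ((q ^ n : ℕ) : ℚ) := by push_cast; ring
    rw [e, padicNorm.nat_eq_one_iff]
    intro hd
    exact h ((Nat.prime_dvd_prime_iff_eq hp.out hq.out).mp (hp.out.dvd_of_dvd_pow hd))
  rw [← one_div, padicNorm.div, padicNorm.one, h1]; norm_num

lemma eq_zero_of_all_div {p : ℕ} [hp : Fact p.Prime] {x : ℚ}
    (h : ∀ n : ℕ, ∃ r : ℚ, padicNorm p r ≤ 1 ∧ x = (p : ℚ) ^ n * r) : x = 0 := by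
  by_contra hx
  have hpos : 0 < padicNorm p x :=
    lt_of_le_of_ne (padicNorm.nonneg x) (Ne.symm (padicNorm.nonzero hx))
  have hp1 : (1 : ℚ) < p := by exact_mod_cast hp.out.one_lt
  obtain ⟨n, hn⟩ := pow_unbounded_of_one_lt (padicNorm p x)⁻¹ hp1
  obtain ⟨r, hr, hxr⟩ := h n
  have hle : padicNorm p x ≤ ((p : ℚ) ^ n)⁻¹ := by
    rw [hxr, padicNorm.mul, pn_pow, padicNorm.padicNorm_p_of_prime, ← inv_pow]
    calc ((p:ℚ)⁻¹)^n * padicNorm p r ≤ ((p:ℚ)⁻¹)^n * 1 := by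
          apply mul_le_mul_of_nonneg_left hr
          positivity
      _ = ((p:ℚ)^n)⁻¹ := by rw [mul_one, inv_pow]
      _ ≤ ((p:ℚ)⁻¹)^n := by rw [inv_pow]
  have hlt : ((p : ℚ) ^ n)⁻¹ < padicNorm p x := by
    rw [inv_lt_comm₀ (by positivity) hpos]
    exact hn
  exact absurd (hle.trans_lt hlt) (lt_irrefl _)

lemma closure_norm_le {M : Type*} [AddCommGroup M] {p : ℕ} [Fact p.Prime]
    (S : Set M) (f : M →+ ℚ) (hS : ∀ m ∈ S, padicNorm p (f m) ≤ 1) :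
    ∀ g ∈ AddSubgroup.closure S, padicNorm p (f g) ≤ 1 := by
  intro g hg
  have h : AddSubgroup.closure S ≤ (padA p).comap f :=
    (AddSubgroup.closure_le _).mpr (fun m hm => hS m hm)
  exact h hg


lemma pn_mul_single_le {p q : ℕ} [Fact p.Prime] [Fact q.Prime] (h : p ≠ q) (n : ℕ)
    {lam : Type*} (β α : lam) :
    padicNorm p (((q : ℚ) ^ n)⁻¹ * (Finsupp.single β (1:ℚ)) α) ≤ 1 := by
  classical
  rcases eq_or_ne β α with rfl | hne
  · rw [Finsupp.single_eq_same, mul_one]; exact (pn_pow_inv h n).le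
  · rw [Finsupp.single_eq_of_ne' hne, mul_zero, padicNorm.zero]; exact zero_le_one

theorem stmt15 (lam : Type*) (p1 p3 p4 p5 : ℕ)
    (hp1 : p1.Prime) (hp3 : p3.Prime) (hp4 : p4.Prime) (hp5 : p5.Prime)
    (h13 : p1 ≠ p3) (h14 : p1 ≠ p4) (h15 : p1 ≠ p5)
    (h34 : p3 ≠ p4) (h35 : p3 ≠ p5) (h45 : p4 ≠ p5)
    (U : Set lam) :
    DivIn p3 (GU p1 p3 p4 p5 U) ∩ DivIn p4 (GU p1 p3 p4 p5 U) = {0} := by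
  haveI := Fact.mk hp1; haveI := Fact.mk hp3; haveI := Fact.mk hp4; haveI := Fact.mk hp5
  have h3 : ∀ g ∈ GU p1 p3 p4 p5 U, ∀ α : lam, padicNorm p3 (g.1 α) ≤ 1 := by
    intro g hg α
    refine closure_norm_le _
      ((Finsupp.applyAddHom α).comp (AddMonoidHom.fst (lam →₀ ℚ) (lam →₀ ℚ))) ?_ g hg
    rintro m (((⟨n, β, rfl⟩ | ⟨n, β, rfl⟩) | ⟨n, β, rfl⟩) | ⟨n, β, hβ, rfl⟩) <;>
      simp only [AddMonoidHom.comp_apply, AddMonoidHom.coe_fst, Finsupp.applyAddHom_apply,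
        Prod.smul_fst, Prod.fst_add, xv, zv, Finsupp.smul_apply, Finsupp.single_apply,
        Finsupp.coe_zero, Pi.zero_apply, smul_eq_mul, mul_zero, smul_zero, add_zero,
        zero_add] <;>
      first
        | exact pn_mul_single_le h13.symm n β α
        | exact pn_mul_single_le h34 n β α
        | simp [padicNorm.zero]
  have h4 : ∀ g ∈ GU p1 p3 p4 p5 U, ∀ α : lam, padicNorm p4 (g.1 α - g.2 α) ≤ 1 := by
    intro g hg α
    refine closure_norm_le _
      (((Finsupp.applyAddHom α).comp (AddMonoidHom.fst (lam →₀ ℚ) (lam →₀ ℚ))) -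
       ((Finsupp.applyAddHom α).comp (AddMonoidHom.snd (lam →₀ ℚ) (lam →₀ ℚ)))) ?_ g hg
    rintro m (((⟨n, β, rfl⟩ | ⟨n, β, rfl⟩) | ⟨n, β, rfl⟩) | ⟨n, β, hβ, rfl⟩) <;>
      simp only [AddMonoidHom.sub_apply, AddMonoidHom.comp_apply, AddMonoidHom.coe_fst,
        AddMonoidHom.coe_snd, Finsupp.applyAddHom_apply, Prod.smul_fst, Prod.smul_snd,
        Prod.fst_add, Prod.snd_add, xv, zv, Finsupp.smul_apply, Finsupp.single_apply,
        Finsupp.coe_zero, Pi.zero_apply, smul_eq_mul, mul_zero, smul_zero, add_zero, zero_add,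
        sub_zero, zero_sub, sub_self, padicNorm.neg] <;>
      first
        | exact pn_mul_single_le h14.symm n β α
        | exact pn_mul_single_le h34.symm n β α
        | exact pn_mul_single_le h45 n β α
        | simp [padicNorm.zero]
  ext g
  simp only [Set.mem_inter_iff, Set.mem_singleton_iff]
  constructor
  · rintro ⟨⟨hgG, hdiv3⟩, ⟨-, hdiv4⟩⟩
    have e1 : g.1 = 0 := by
      ext α
      rw [Finsupp.coe_zero, Pi.zero_apply]
      apply eq_zero_of_all_div (p := p3)
      intro n
      obtain ⟨y, hy, hny⟩ := hdiv3 n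
      refine ⟨y.1 α, h3 y hy α, ?_⟩
      rw [← hny]
      simp only [Prod.smul_fst, Finsupp.smul_apply, nsmul_eq_mul]
      push_cast
      ring
    have e2 : g.2 = 0 := by
      ext α
      rw [Finsupp.coe_zero, Pi.zero_apply]
      have h0 : g.1 α - g.2 α = 0 := by
        apply eq_zero_of_all_div (p := p4)
        intro n
        obtain ⟨y, hy, hny⟩ := hdiv4 n
        refine ⟨y.1 α - y.2 α, h4 y hy α, ?_⟩
        rw [← hny]
        simp only [Prod.smul_fst, Prod.smul_snd, Finsupp.smul_apply, nsmul_eq_mul]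
        push_cast
        ring
      rw [e1, Finsupp.coe_zero, Pi.zero_apply, zero_sub, neg_eq_zero] at h0
      exact h0
    exact Prod.ext e1 e2
  · rintro rfl
    exact ⟨⟨zero_mem _, fun n => ⟨0, zero_mem _, smul_zero _⟩⟩,
      ⟨zero_mem _, fun n => ⟨0, zero_mem _, smul_zero _⟩⟩⟩
end

section
/- With M, x_α, z_α, distinct primes p₁, p₃, p₄, p₅, U ⊆ λ, and G_U the subgroup of M = (⊕_{α∈λ} ℚ x_α) ⊕ (⊕_{α∈λ} ℚ z_α) generated by {p₁^{-n} x_α, p₃^{-n} z_α, p₄^{-n}(x_α+z_α), p₅^{-n} z_β : n < ω, α ∈ λ, β ∈ U}, the group G_U satisfies condition K₂(b): for every g ∈ p₁^ω G_U there exist a positive integer k and z ∈ p₃^ω G_U such that k·g + z ∈ p₄^ω G_U. -/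
section Aux

/-- the subgroup of ℚ of rationals with denominator a power of `s` -/
def Dp (s : ℕ) : AddSubgroup ℚ where
  carrier := {q | ∃ (n : ℕ) (a : ℤ), (s : ℚ) ^ n * q = a}
  zero_mem' := ⟨0, 0, by simp⟩
  add_mem' := by
    rintro q1 q2 ⟨n1, a1, h1⟩ ⟨n2, a2, h2⟩
    exact ⟨n1 + n2, s ^ n2 * a1 + s ^ n1 * a2, by
      push_cast
      linear_combination (s : ℚ) ^ n2 * h1 + (s : ℚ) ^ n1 * h2⟩
  neg_mem' := by
    rintro q ⟨n, a, h⟩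
    exact ⟨n, -a, by push_cast; linear_combination -h⟩

lemma inv_mem_Dp {p : ℕ} (hp : 0 < p) (b : ℕ) (n : ℕ) : ((p : ℚ) ^ n)⁻¹ ∈ Dp (p * b) := by
  refine ⟨n, (b : ℤ) ^ n, ?_⟩
  have hp0 : (p : ℚ) ≠ 0 := Nat.cast_ne_zero.mpr hp.ne'
  push_cast
  field_simp
  ring

variable {lam : Type*}

noncomputable def Ag (p1 p3 p4 p5 : ℕ) (lam : Type*) : AddSubgroup (Msp lam) where
  carrier := {m | (∀ α, m.1 α ∈ Dp (p1 * p4)) ∧ (∀ α, m.2 α ∈ Dp (p3 * p4 * p5)) ∧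
      (∀ α, m.1 α - m.2 α ∈ Dp (p1 * p3 * p5))}
  zero_mem' := by
    refine ⟨fun α => ?_, fun α => ?_, fun α => ?_⟩ <;> simpa using zero_mem _
  add_mem' := by
    rintro a b ⟨ha1, ha2, ha3⟩ ⟨hb1, hb2, hb3⟩
    refine ⟨fun α => ?_, fun α => ?_, fun α => ?_⟩
    · simpa using add_mem (ha1 α) (hb1 α)
    · simpa using add_mem (ha2 α) (hb2 α)
    · have h := add_mem (ha3 α) (hb3 α)
      simp only [Prod.fst_add, Prod.snd_add, Finsupp.add_apply]
      convert h using 1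
      ring
  neg_mem' := by
    rintro a ⟨ha1, ha2, ha3⟩
    refine ⟨fun α => ?_, fun α => ?_, fun α => ?_⟩
    · simpa using neg_mem (ha1 α)
    · simpa using neg_mem (ha2 α)
    · have h := neg_mem (ha3 α)
      simp only [Prod.fst_neg, Prod.snd_neg, Finsupp.neg_apply]
      convert h using 1
      ring

lemma single_term_mem {S : AddSubgroup ℚ} {q : ℚ} (hq : q ∈ S) (α β : lam) :
    q * (Finsupp.single α (1 : ℚ)) β ∈ S := by
  rcases eq_or_ne α β with h | h
  · subst h; rw [Finsupp.single_eq_same, mul_one]; exact hq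
  · rw [Finsupp.single_eq_of_ne' h, mul_zero]; exact zero_mem _

lemma GU_le_Ag (p1 p3 p4 p5 : ℕ) (hp1 : 0 < p1) (hp3 : 0 < p3) (hp4 : 0 < p4) (hp5 : 0 < p5)
    (U : Set lam) : GU p1 p3 p4 p5 U ≤ Ag p1 p3 p4 p5 lam := by
  rw [GU, AddSubgroup.closure_le]
  rintro m (((⟨n, α, rfl⟩ | ⟨n, α, rfl⟩) | ⟨n, α, rfl⟩) | ⟨n, α, hα, rfl⟩)
  · refine ⟨fun β => ?_, fun β => ?_, fun β => ?_⟩ <;>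
      simp only [xv, Prod.smul_mk, smul_zero, Finsupp.smul_apply,
        Finsupp.coe_zero, Pi.zero_apply, smul_eq_mul, sub_zero]
    · exact single_term_mem (inv_mem_Dp hp1 p4 n) α β
    · exact zero_mem _
    · have e : p1 * p3 * p5 = p1 * (p3 * p5) := by ring
      rw [e]; exact single_term_mem (inv_mem_Dp hp1 (p3 * p5) n) α β
  · refine ⟨fun β => ?_, fun β => ?_, fun β => ?_⟩ <;>
      simp only [zv, Prod.smul_mk, smul_zero, Finsupp.smul_apply,
        Finsupp.coe_zero, Pi.zero_apply, smul_eq_mul, zero_sub]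
    · exact zero_mem _
    · have e : p3 * p4 * p5 = p3 * (p4 * p5) := by ring
      rw [e]; exact single_term_mem (inv_mem_Dp hp3 (p4 * p5) n) α β
    · have e : p1 * p3 * p5 = p3 * (p1 * p5) := by ring
      rw [e]; exact neg_mem (single_term_mem (inv_mem_Dp hp3 (p1 * p5) n) α β)
  · refine ⟨fun β => ?_, fun β => ?_, fun β => ?_⟩ <;>
      simp only [xv, zv, Prod.mk_add_mk, Prod.smul_mk, smul_zero, zero_add, add_zero,
        Finsupp.smul_apply, smul_eq_mul, sub_self]
    · have e : p1 * p4 = p4 * p1 := by ring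
      rw [e]; exact single_term_mem (inv_mem_Dp hp4 p1 n) α β
    · have e : p3 * p4 * p5 = p4 * (p3 * p5) := by ring
      rw [e]; exact single_term_mem (inv_mem_Dp hp4 (p3 * p5) n) α β
    · exact zero_mem _
  · refine ⟨fun β => ?_, fun β => ?_, fun β => ?_⟩ <;>
      simp only [zv, Prod.smul_mk, smul_zero, Finsupp.smul_apply,
        Finsupp.coe_zero, Pi.zero_apply, smul_eq_mul, zero_sub]
    · exact zero_mem _
    · have e : p3 * p4 * p5 = p5 * (p3 * p4) := by ring
      rw [e]; exact single_term_mem (inv_mem_Dp hp5 (p3 * p4) n) α β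
    · have e : p1 * p3 * p5 = p5 * (p1 * p3) := by ring
      rw [e]; exact neg_mem (single_term_mem (inv_mem_Dp hp5 (p1 * p3) n) α β)

lemma den_dvd_of_mul (c : ℕ) (hc : c ≠ 0) (q : ℚ) (a : ℤ) (h : (c : ℚ) * q = a) :
    (q.den : ℤ) ∣ (c : ℤ) := by
  have hc0 : (c : ℚ) ≠ 0 := Nat.cast_ne_zero.mpr hc
  have hq : q = Rat.divInt a (c : ℤ) := by
    rw [Rat.divInt_eq_div]
    rw [eq_div_iff (by exact_mod_cast hc0)]
    push_cast
    linear_combination h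
  rw [hq]
  exact Rat.den_dvd a (c : ℤ)

lemma key_zero (p s : ℕ) (hp : p.Prime) (hcop : Nat.Coprime p s) (r : ℚ)
    (h : ∀ n : ℕ, ∃ (m : ℕ) (a : ℤ), (s : ℚ) ^ m * (((p : ℚ) ^ n)⁻¹ * r) = a) : r = 0 := by
  by_contra hr
  set n := r.num.natAbs with hn
  obtain ⟨m, a, h⟩ := h n
  have hp0 : (p : ℚ) ≠ 0 := Nat.cast_ne_zero.mpr hp.pos.ne'
  have h2 : (s : ℚ) ^ m * r = (a : ℚ) * (p : ℚ) ^ n := by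
    field_simp at h
    linarith [h]
  have hden : (r.den : ℚ) ≠ 0 := Nat.cast_ne_zero.mpr r.den_nz
  have h4 : (r.num : ℚ) = r * r.den := (Rat.mul_den_eq_num r).symm
  have h3 : ((s : ℤ) ^ m * r.num : ℚ) = ((a * (p : ℤ) ^ n * (r.den : ℤ) : ℤ) : ℚ) := by
    push_cast
    linear_combination (r.den : ℚ) * h2 + (s : ℚ) ^ m * h4
  have h3' : (s : ℤ) ^ m * r.num = a * (p : ℤ) ^ n * (r.den : ℤ) := by exact_mod_cast h3
  have h5 : (p : ℤ) ^ n ∣ (s : ℤ) ^ m * r.num := ⟨a * (r.den : ℤ), by linarith [h3']⟩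
  have hcp : IsCoprime ((p : ℤ) ^ n) ((s : ℤ) ^ m) := (Nat.isCoprime_iff_coprime.mpr hcop).pow
  have h6 : (p : ℤ) ^ n ∣ r.num := hcp.dvd_of_dvd_mul_left h5
  have h7 : p ^ n ∣ n := by
    have := Int.natAbs_dvd_natAbs.mpr h6
    simpa [Int.natAbs_pow] using this
  have hnum : r.num ≠ 0 := Rat.num_ne_zero.mpr hr
  have hn0 : 0 < n := Int.natAbs_pos.mpr hnum
  have hle := Nat.le_of_dvd hn0 h7
  have h8 : n < 2 ^ n := Nat.lt_two_pow_self
  have h9 : (2 : ℕ) ^ n ≤ p ^ n := Nat.pow_le_pow_left hp.two_le n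
  omega

lemma key_int (p s t : ℕ) (hs : 0 < s) (ht : 0 < t) (hcop : Nat.Coprime s t)
    (q : ℚ) (h1 : q ∈ Dp (p * s)) (h2 : q ∈ Dp (p * t)) :
    ∃ (N : ℕ) (c : ℤ), (p : ℚ) ^ N * q = c := by
  obtain ⟨m, a, h1⟩ := h1
  obtain ⟨k, b, h2⟩ := h2
  set Q : ℚ := (p : ℚ) ^ (m + k) * q with hQ
  have hd1 : (Q.den : ℤ) ∣ ((s ^ m : ℕ) : ℤ) := by
    apply den_dvd_of_mul (s ^ m) (pow_ne_zero m hs.ne') Q ((p : ℤ) ^ k * a)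
    push_cast at h1 ⊢
    linear_combination (p : ℚ) ^ k * h1
  have hd2 : (Q.den : ℤ) ∣ ((t ^ k : ℕ) : ℤ) := by
    apply den_dvd_of_mul (t ^ k) (pow_ne_zero k ht.ne') Q ((p : ℤ) ^ m * b)
    push_cast at h2 ⊢
    linear_combination (p : ℚ) ^ m * h2
  have hden1 : Q.den = 1 := by
    have d1 : Q.den ∣ s ^ m := Int.ofNat_dvd.mp hd1
    have d2 : Q.den ∣ t ^ k := Int.ofNat_dvd.mp hd2
    have hg : Nat.gcd (s ^ m) (t ^ k) = 1 := Nat.Coprime.pow m k hcop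
    have := Nat.dvd_gcd d1 d2
    rw [hg] at this
    exact Nat.dvd_one.mp this
  exact ⟨m + k, Q.num, ((Rat.den_eq_one_iff Q).mp hden1).symm⟩

end Aux

theorem stmt16 (lam : Type*) (p1 p3 p4 p5 : ℕ)
    (hp1 : p1.Prime) (hp3 : p3.Prime) (hp4 : p4.Prime) (hp5 : p5.Prime)
    (h13 : p1 ≠ p3) (h14 : p1 ≠ p4) (h15 : p1 ≠ p5)
    (h34 : p3 ≠ p4) (h35 : p3 ≠ p5) (h45 : p4 ≠ p5)
    (U : Set lam) :
    ∀ g ∈ DivIn p1 (GU p1 p3 p4 p5 U),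
      ∃ k : ℕ, 0 < k ∧ ∃ z ∈ DivIn p3 (GU p1 p3 p4 p5 U),
        k • g + z ∈ DivIn p4 (GU p1 p3 p4 p5 U) := by
  classical
  intro g hg
  obtain ⟨hgG, hdiv⟩ := hg
  have hp1Q : (p1 : ℚ) ≠ 0 := Nat.cast_ne_zero.mpr hp1.pos.ne'
  have hp3Q : (p3 : ℚ) ≠ 0 := Nat.cast_ne_zero.mpr hp3.pos.ne'
  have hp4Q : (p4 : ℚ) ≠ 0 := Nat.cast_ne_zero.mpr hp4.pos.ne'
  have hle := GU_le_Ag p1 p3 p4 p5 hp1.pos hp3.pos hp4.pos hp5.pos U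
  -- every p1-power-division of g lies in Ag
  have hA : ∀ n : ℕ, (((p1 : ℚ) ^ n)⁻¹ • g) ∈ Ag p1 p3 p4 p5 lam := by
    intro n
    obtain ⟨y, hy, hyg⟩ := hdiv n
    have hcast : ((p1 ^ n : ℕ) : ℚ) • y = g := by
      rw [Nat.cast_smul_eq_nsmul]; exact hyg
    have hy' : y = ((p1 : ℚ) ^ n)⁻¹ • g := by
      rw [← hcast]
      push_cast
      rw [inv_smul_smul₀ (pow_ne_zero n hp1Q)]
    rw [← hy']
    exact hle hy
  -- coprimality facts
  have c13 : Nat.Coprime p1 p3 := (Nat.coprime_primes hp1 hp3).mpr h13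
  have c14 : Nat.Coprime p1 p4 := (Nat.coprime_primes hp1 hp4).mpr h14
  have c15 : Nat.Coprime p1 p5 := (Nat.coprime_primes hp1 hp5).mpr h15
  have c43 : Nat.Coprime p4 p3 := ((Nat.coprime_primes hp4 hp3).mpr (Ne.symm h34))
  have c45 : Nat.Coprime p4 p5 := (Nat.coprime_primes hp4 hp5).mpr h45
  -- the z-part of g vanishes
  have hz0 : g.2 = 0 := by
    ext α
    refine key_zero p1 (p3 * p4 * p5) hp1 ((c13.mul_right c14).mul_right c15) (g.2 α) ?_
    intro n
    obtain ⟨-, h2, -⟩ := hA n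
    obtain ⟨m, a, hma⟩ := h2 α
    refine ⟨m, a, ?_⟩
    rw [← hma]
    congr 1
  -- the x-part of g has coefficients in ℤ[1/p1]
  have hgA : g ∈ Ag p1 p3 p4 p5 lam := hle hgG
  have hint : ∀ α, ∃ (N : ℕ) (c : ℤ), (p1 : ℚ) ^ N * g.1 α = c := by
    intro α
    obtain ⟨h1, -, h3⟩ := hgA
    have h3' : g.1 α ∈ Dp (p1 * (p3 * p5)) := by
      have e : p1 * (p3 * p5) = p1 * p3 * p5 := by ring
      rw [e]
      have := h3 α
      rw [hz0] at this
      simpa using this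
    exact key_int p1 p4 (p3 * p5) hp4.pos (Nat.mul_pos hp3.pos hp5.pos)
      (c43.mul_right c45) (g.1 α) (h1 α) h3'
  choose Nf cf hcf using hint
  set s : Finset lam := g.1.support with hs
  set N : ℕ := s.sup Nf with hN
  have hcN : ∀ α, ∃ c : ℤ, (p1 : ℚ) ^ N * g.1 α = c := by
    intro α
    by_cases hα : α ∈ s
    · refine ⟨p1 ^ (N - Nf α) * cf α, ?_⟩
      have hle' : Nf α ≤ N := Finset.le_sup hα
      have e : (p1 : ℚ) ^ N = (p1 : ℚ) ^ (N - Nf α) * (p1 : ℚ) ^ (Nf α) := by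
        rw [← pow_add, Nat.sub_add_cancel hle']
      rw [e, mul_assoc, hcf α]
      push_cast
      ring
    · refine ⟨0, ?_⟩
      have : g.1 α = 0 := Finsupp.notMem_support_iff.mp hα
      simp [this]
  choose c hc using hcN
  set F : lam →₀ ℚ := (p1 : ℚ) ^ N • g.1 with hF
  have hFa : ∀ α, F α = (c α : ℚ) := fun α => by
    rw [hF, Finsupp.smul_apply, smul_eq_mul, hc α]
  have hFsum : F = ∑ α ∈ s, Finsupp.single α ((c α : ℚ)) := by
    ext β
    rw [Finsupp.finset_sum_apply]
    by_cases hβ : β ∈ s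
    · rw [Finset.sum_eq_single β (fun b _ hb => Finsupp.single_eq_of_ne' hb)
        (fun h => absurd hβ h)]
      rw [Finsupp.single_eq_same, hFa]
    · have hgβ : g.1 β = 0 := Finsupp.notMem_support_iff.mp hβ
      rw [Finset.sum_eq_zero (fun α hα => Finsupp.single_eq_of_ne' (by rintro rfl; exact hβ hα))]
      simp [hF, hgβ]
  -- generators
  have genz : ∀ (n : ℕ) (α : lam),
      ((0 : lam →₀ ℚ), ((p3 : ℚ) ^ n)⁻¹ • Finsupp.single α (1 : ℚ)) ∈ GU p1 p3 p4 p5 U := by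
    intro n α
    rw [GU]
    apply AddSubgroup.subset_closure
    exact Or.inl (Or.inl (Or.inr ⟨n, α, by simp [zv, Prod.smul_mk]⟩))
  have genxz : ∀ (n : ℕ) (α : lam),
      (((p4 : ℚ) ^ n)⁻¹ • Finsupp.single α (1 : ℚ),
       ((p4 : ℚ) ^ n)⁻¹ • Finsupp.single α (1 : ℚ)) ∈ GU p1 p3 p4 p5 U := by
    intro n α
    rw [GU]
    apply AddSubgroup.subset_closure
    exact Or.inl (Or.inr ⟨n, α, by simp [xv, zv, Prod.smul_mk]⟩)
  have claim : ∀ (v : lam → Msp lam), (∀ α, v α ∈ GU p1 p3 p4 p5 U) →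
      (∑ α ∈ s, c α • v α) ∈ GU p1 p3 p4 p5 U :=
    fun v hv => AddSubgroup.sum_mem _ (fun α _ => AddSubgroup.zsmul_mem _ (hv α) (c α))
  -- the z-divisibility of z := (0, F)
  have hterm3 : ∀ (n : ℕ) (α : lam),
      (p3 ^ n : ℕ) • (c α • ((0 : lam →₀ ℚ), ((p3 : ℚ) ^ n)⁻¹ • Finsupp.single α (1 : ℚ)))
        = ((0 : lam →₀ ℚ), Finsupp.single α ((c α : ℚ))) := by
    intro n α
    rw [← Nat.cast_smul_eq_nsmul ℚ, ← Int.cast_smul_eq_zsmul ℚ, smul_smul]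
    push_cast
    refine Prod.ext ?_ ?_
    · simp
    · show ((p3 : ℚ) ^ n * (c α : ℚ)) • (((p3 : ℚ) ^ n)⁻¹ • Finsupp.single α (1 : ℚ))
        = Finsupp.single α ((c α : ℚ))
      rw [smul_smul, Finsupp.smul_single, smul_eq_mul, mul_one]
      congr 1
      field_simp
  have hterm4 : ∀ (n : ℕ) (α : lam),
      (p4 ^ n : ℕ) • (c α • (((p4 : ℚ) ^ n)⁻¹ • Finsupp.single α (1 : ℚ),
          ((p4 : ℚ) ^ n)⁻¹ • Finsupp.single α (1 : ℚ)))
        = (Finsupp.single α ((c α : ℚ)), Finsupp.single α ((c α : ℚ))) := by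
    intro n α
    rw [← Nat.cast_smul_eq_nsmul ℚ, ← Int.cast_smul_eq_zsmul ℚ, smul_smul]
    push_cast
    refine Prod.ext ?_ ?_ <;>
    · show ((p4 : ℚ) ^ n * (c α : ℚ)) • (((p4 : ℚ) ^ n)⁻¹ • Finsupp.single α (1 : ℚ))
        = Finsupp.single α ((c α : ℚ))
      rw [smul_smul, Finsupp.smul_single, smul_eq_mul, mul_one]
      congr 1
      field_simp
  have hzdiv : ∀ n : ℕ, ∃ y ∈ GU p1 p3 p4 p5 U, p3 ^ n • y = ((0 : lam →₀ ℚ), F) := by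
    intro n
    refine ⟨∑ α ∈ s, c α • ((0 : lam →₀ ℚ), ((p3 : ℚ) ^ n)⁻¹ • Finsupp.single α (1 : ℚ)),
      claim _ (genz n), ?_⟩
    rw [Finset.smul_sum]
    rw [Finset.sum_congr rfl (fun α _ => hterm3 n α)]
    refine Prod.ext ?_ ?_
    · simp [Prod.fst_sum]
    · simp only [Prod.snd_sum]
      rw [hFsum]
  have hxzdiv : ∀ n : ℕ, ∃ y ∈ GU p1 p3 p4 p5 U, p4 ^ n • y = (F, F) := by
    intro n
    refine ⟨∑ α ∈ s, c α • (((p4 : ℚ) ^ n)⁻¹ • Finsupp.single α (1 : ℚ),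
      ((p4 : ℚ) ^ n)⁻¹ • Finsupp.single α (1 : ℚ)), claim _ (genxz n), ?_⟩
    rw [Finset.smul_sum]
    rw [Finset.sum_congr rfl (fun α _ => hterm4 n α)]
    refine Prod.ext ?_ ?_
    · simp only [Prod.fst_sum]
      rw [hFsum]
    · simp only [Prod.snd_sum]
      rw [hFsum]
  have hzGU : ((0 : lam →₀ ℚ), F) ∈ GU p1 p3 p4 p5 U := by
    obtain ⟨y, hy, hye⟩ := hzdiv 0
    rw [← hye]
    simpa using hy
  have hxzGU : ((F, F) : Msp lam) ∈ GU p1 p3 p4 p5 U := by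
    obtain ⟨y, hy, hye⟩ := hxzdiv 0
    rw [← hye]
    simpa using hy
  refine ⟨p1 ^ N, pow_pos hp1.pos N, ((0 : lam →₀ ℚ), F), ⟨hzGU, hzdiv⟩, ?_⟩
  have hkg : (p1 ^ N : ℕ) • g + ((0 : lam →₀ ℚ), F) = ((F, F) : Msp lam) := by
    refine Prod.ext ?_ ?_
    · show (p1 ^ N : ℕ) • g.1 + 0 = F
      rw [add_zero, ← Nat.cast_smul_eq_nsmul ℚ, hF]
      push_cast
      rfl
    · show (p1 ^ N : ℕ) • g.2 + F = F
      rw [hz0]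
      simp
  rw [hkg]
  exact ⟨hxzGU, hxzdiv⟩
end

section
/- With M, x_α, z_α, distinct primes p₁, p₃, p₄, p₅, U ⊆ λ as above, let G_λ ≤ M be the subgroup generated by {p₁^{-n} x_α : n < ω, α ∈ λ} and G_U ≤ M the subgroup generated by {p₁^{-n} x_α, p₃^{-n} z_α, p₄^{-n}(x_α+z_α), p₅^{-n} z_β : n < ω, α ∈ λ, β ∈ U}. Then G_λ is a pure subgroup of G_U: for every prime q, G_λ ∩ q·G_U = q·G_λ. -/
/-- Rationals whose denominator is a power of `p`. -/
def Ap (p : ℕ) : AddSubgroup ℚ where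
  carrier := {r | ∃ n : ℕ, ∃ k : ℤ, (p : ℚ) ^ n * r = (k : ℚ)}
  zero_mem' := ⟨0, 0, by simp⟩
  add_mem' := by
    rintro a b ⟨n, k, hk⟩ ⟨m, l, hl⟩
    refine ⟨n + m, k * (p:ℤ)^m + l * (p:ℤ)^n, ?_⟩
    push_cast
    calc (p:ℚ)^(n+m) * (a + b)
        = (p:ℚ)^m * ((p:ℚ)^n * a) + (p:ℚ)^n * ((p:ℚ)^m * b) := by ring
      _ = (k:ℚ) * (p:ℚ)^m + (l:ℚ) * (p:ℚ)^n := by rw [hk, hl]; ring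
  neg_mem' := by
    rintro a ⟨n, k, hk⟩
    exact ⟨n, -k, by push_cast; rw [mul_neg, hk]⟩

theorem intCast_mem_Ap (p : ℕ) (k : ℤ) : (k : ℚ) ∈ Ap p := ⟨0, k, by simp⟩

theorem inv_pow_mem_Ap {p : ℕ} (hp : p ≠ 0) (n : ℕ) : ((p:ℚ)^n)⁻¹ ∈ Ap p := by
  refine ⟨n, 1, ?_⟩
  have h : (p:ℚ) ≠ 0 := Nat.cast_ne_zero.mpr hp
  field_simp
  simp

theorem inv_mul_mem_Ap {p : ℕ} (hp : p ≠ 0) {r : ℚ} (hr : r ∈ Ap p) :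
    (p:ℚ)⁻¹ * r ∈ Ap p := by
  obtain ⟨n, k, hk⟩ := hr
  refine ⟨n + 1, k, ?_⟩
  have h : (p:ℚ) ≠ 0 := Nat.cast_ne_zero.mpr hp
  rw [← hk]; field_simp; ring

/-- denominator of an element of `Ap p` divides a power of p -/
theorem Ap_den_dvd {p : ℕ} (hp : p ≠ 0) {r : ℚ} (hr : r ∈ Ap p) :
    ∃ n : ℕ, r.den ∣ p ^ n := by
  obtain ⟨n, k, hk⟩ := hr
  refine ⟨n, ?_⟩
  have hpn : ((p:ℚ))^n ≠ 0 := pow_ne_zero _ (Nat.cast_ne_zero.mpr hp)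
  have hr' : r = (k : ℚ) / ((p^n : ℕ) : ℚ) := by
    push_cast
    field_simp
    linarith [hk]
  have h2 : r.den = ((k : ℚ) / ((p^n : ℕ) : ℚ)).den := by rw [hr']
  rw [h2]
  have h3 : (((k:ℚ)/((p^n:ℕ):ℚ)).den : ℤ) ∣ ((p^n : ℕ) : ℤ) := by
    rw [show ((k:ℚ)/((p^n:ℕ):ℚ)) = Rat.divInt k ((p^n:ℕ):ℤ) by rw [Rat.divInt_eq_div]; push_cast; ring]
    exact Rat.den_dvd k ((p^n : ℕ) : ℤ)
  exact_mod_cast h3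

/-- Key arithmetic lemma: an element of `Ap p4 ∩ (Ap p3 ⊔ Ap p5)` is an integer,
hence lies in `Ap p1`. -/
theorem Ap_inter_mem {p1 p3 p4 p5 : ℕ}
    (hp3 : p3.Prime) (hp4 : p4.Prime) (hp5 : p5.Prime) (h34 : p3 ≠ p4) (h45 : p4 ≠ p5)
    {r : ℚ} (h4 : r ∈ Ap p4) (h35 : r ∈ Ap p3 ⊔ Ap p5) : r ∈ Ap p1 := by
  obtain ⟨a, ha, b, hb, hab⟩ := AddSubgroup.mem_sup.mp h35
  obtain ⟨N, hN⟩ := Ap_den_dvd hp4.ne_zero h4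
  have hab' : r ∈ Ap (p3 * p5) := by
    obtain ⟨m, k3, hk3⟩ := ha
    obtain ⟨n, k5, hk5⟩ := hb
    refine ⟨m + n, k3 * (p5:ℤ)^n * (p3:ℤ)^n * (p5:ℤ)^m + k5 * (p3:ℤ)^m * (p3:ℤ)^n * (p5:ℤ)^m, ?_⟩
    rw [← hab]
    push_cast
    calc ((p3:ℚ) * p5)^(m+n) * (a + b)
        = ((p3:ℚ)^m * a) * ((p5:ℚ)^n * (p3:ℚ)^n * (p5:ℚ)^m)
          + ((p5:ℚ)^n * b) * ((p3:ℚ)^m * (p3:ℚ)^n * (p5:ℚ)^m) := by ring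
      _ = _ := by rw [hk3, hk5]; ring
  obtain ⟨M, hM⟩ := Ap_den_dvd (Nat.mul_ne_zero hp3.ne_zero hp5.ne_zero) hab'
  have hcop : Nat.Coprime (p4 ^ N) ((p3 * p5) ^ M) := by
    apply Nat.Coprime.pow
    apply Nat.Coprime.mul_right
    · exact ((Nat.coprime_primes hp4 hp3).mpr h34.symm)
    · exact ((Nat.coprime_primes hp4 hp5).mpr h45)
  have hden : r.den = 1 := Nat.eq_one_of_dvd_coprimes hcop hN hM
  have hnum : (r.num : ℚ) = r := (Rat.den_eq_one_iff r).mp hden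
  exact ⟨0, r.num, by simpa using hnum.symm⟩

section Main

variable {lam : Type*}

/-- Subgroup of `Msp` capturing the shape of elements of `GU`. -/
noncomputable def Tgu (lam : Type*) (p1 p3 p4 p5 : ℕ) : AddSubgroup (Msp lam) where
  carrier := {m | ∃ c : lam →₀ ℚ, (∀ α, c α ∈ Ap p4) ∧ (∀ α, m.1 α - c α ∈ Ap p1) ∧
      (∀ α, m.2 α - c α ∈ Ap p3 ⊔ Ap p5)}
  zero_mem' := ⟨0, fun α => by simp [AddSubgroup.zero_mem],
    fun α => by simp [AddSubgroup.zero_mem],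
    fun α => by simp [AddSubgroup.zero_mem]⟩
  add_mem' := by
    rintro a b ⟨c, hc4, hc1, hc35⟩ ⟨d, hd4, hd1, hd35⟩
    refine ⟨c + d, fun α => by simpa using add_mem (hc4 α) (hd4 α), fun α => ?_, fun α => ?_⟩
    · have := add_mem (hc1 α) (hd1 α)
      simpa [Finsupp.add_apply, sub_add_sub_comm] using this
    · have := add_mem (hc35 α) (hd35 α)
      simpa [Finsupp.add_apply, sub_add_sub_comm] using this
  neg_mem' := by
    rintro a ⟨c, hc4, hc1, hc35⟩
    refine ⟨-c, fun α => by simpa using neg_mem (hc4 α), fun α => ?_, fun α => ?_⟩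
    · have := neg_mem (hc1 α)
      simpa [Finsupp.neg_apply, neg_sub', sub_eq_add_neg, add_comm] using this
    · have := neg_mem (hc35 α)
      simpa [Finsupp.neg_apply, neg_sub', sub_eq_add_neg, add_comm] using this

/-- Subgroup of `Msp` capturing the shape of elements of `Glam`. -/
noncomputable def Tlam (lam : Type*) (p1 : ℕ) : AddSubgroup (Msp lam) where
  carrier := {m | (∀ α, m.1 α ∈ Ap p1) ∧ m.2 = 0}
  zero_mem' := ⟨fun α => by simp [AddSubgroup.zero_mem], rfl⟩
  add_mem' := by
    rintro a b ⟨ha1, ha2⟩ ⟨hb1, hb2⟩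
    exact ⟨fun α => by simpa using add_mem (ha1 α) (hb1 α), by simp [ha2, hb2]⟩
  neg_mem' := by
    rintro a ⟨ha1, ha2⟩
    exact ⟨fun α => by simpa using neg_mem (ha1 α), by simp [ha2]⟩

theorem GU_le_Tgu (p1 p3 p4 p5 : ℕ) (hp1 : p1 ≠ 0) (hp3 : p3 ≠ 0) (hp4 : p4 ≠ 0)
    (hp5 : p5 ≠ 0) (U : Set lam) : GU p1 p3 p4 p5 U ≤ Tgu lam p1 p3 p4 p5 := by
  rw [GU]
  apply AddSubgroup.closure_le _ |>.mpr
  rintro m (((⟨n, α, rfl⟩ | ⟨n, α, rfl⟩) | ⟨n, α, rfl⟩) | ⟨n, β, hβ, rfl⟩)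
  · refine ⟨0, fun γ => by simp [AddSubgroup.zero_mem], fun γ => ?_, fun γ => ?_⟩
    · simp only [xv, Prod.smul_fst, Finsupp.coe_zero, Pi.zero_apply, sub_zero,
        Finsupp.smul_apply, Finsupp.smul_single]
      rcases eq_or_ne γ α with rfl | h
      · simpa [Finsupp.single_apply] using inv_pow_mem_Ap hp1 n
      · simp [Finsupp.single_apply, h.symm, AddSubgroup.zero_mem]
    · simp [xv, AddSubgroup.zero_mem]
  · refine ⟨0, fun γ => by simp [AddSubgroup.zero_mem], fun γ => ?_, fun γ => ?_⟩
    · simp [zv, AddSubgroup.zero_mem]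
    · simp only [zv, Prod.smul_snd, Finsupp.coe_zero, Pi.zero_apply, sub_zero,
        Finsupp.smul_apply, Finsupp.smul_single]
      rcases eq_or_ne γ α with rfl | h
      · apply AddSubgroup.mem_sup_left
        simpa [Finsupp.single_apply] using inv_pow_mem_Ap hp3 n
      · simp [Finsupp.single_apply, h.symm, AddSubgroup.zero_mem]
  · refine ⟨Finsupp.single α ((p4:ℚ)^n)⁻¹, fun γ => ?_, fun γ => ?_, fun γ => ?_⟩
    · rcases eq_or_ne γ α with rfl | h
      · simpa [Finsupp.single_apply] using inv_pow_mem_Ap hp4 n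
      · simp [Finsupp.single_apply, h.symm, AddSubgroup.zero_mem]
    · simp [xv, zv, AddSubgroup.zero_mem]
    · simp [xv, zv, AddSubgroup.zero_mem]
  · refine ⟨0, fun γ => by simp [AddSubgroup.zero_mem], fun γ => ?_, fun γ => ?_⟩
    · simp [zv, AddSubgroup.zero_mem]
    · simp only [zv, Prod.smul_snd, Finsupp.coe_zero, Pi.zero_apply, sub_zero,
        Finsupp.smul_apply, Finsupp.smul_single]
      rcases eq_or_ne γ β with rfl | h
      · apply AddSubgroup.mem_sup_right
        simpa [Finsupp.single_apply] using inv_pow_mem_Ap hp5 n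
      · simp [Finsupp.single_apply, h.symm, AddSubgroup.zero_mem]

theorem Glam_le_Tlam (p1 : ℕ) (hp1 : p1 ≠ 0) : Glam lam p1 ≤ Tlam lam p1 := by
  rw [Glam]
  apply AddSubgroup.closure_le _ |>.mpr
  rintro m ⟨n, α, rfl⟩
  refine ⟨fun γ => ?_, by simp [xv]⟩
  simp only [xv, Prod.smul_fst, Finsupp.smul_apply, Finsupp.smul_single]
  rcases eq_or_ne γ α with rfl | h
  · simpa [Finsupp.single_apply] using inv_pow_mem_Ap hp1 n
  · simp [Finsupp.single_apply, h.symm, AddSubgroup.zero_mem]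

theorem single_mem_Glam (p1 : ℕ) (α : lam) {r : ℚ} (hr : r ∈ Ap p1) (hp1 : p1 ≠ 0) :
    ((Finsupp.single α r, 0) : Msp lam) ∈ Glam lam p1 := by
  obtain ⟨n, k, hk⟩ := hr
  have hpn : ((p1:ℚ))^n ≠ 0 := pow_ne_zero _ (Nat.cast_ne_zero.mpr hp1)
  have hr' : r = (k : ℚ) * ((p1:ℚ)^n)⁻¹ := by field_simp; linarith [hk]
  have hgen : (((p1:ℚ)^n)⁻¹ • xv α : Msp lam) ∈ Glam lam p1 :=
    AddSubgroup.subset_closure ⟨n, α, rfl⟩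
  have := AddSubgroup.zsmul_mem _ hgen k
  convert this using 1
  rw [hr']
  simp only [xv, Prod.smul_fst, Prod.smul_snd, smul_zero, Prod.smul_mk]
  ext β <;> simp [Finsupp.smul_single, Finsupp.single_apply, mul_comm]

theorem mem_Glam_of_coords (p1 : ℕ) (hp1 : p1 ≠ 0) (f : lam →₀ ℚ)
    (hf : ∀ α, f α ∈ Ap p1) : ((f, 0) : Msp lam) ∈ Glam lam p1 := by
  induction f using Finsupp.induction with
  | zero => exact AddSubgroup.zero_mem _
  | single_add a b f ha hb ih =>
    have hrest : ∀ α, f α ∈ Ap p1 := by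
      intro α
      rcases eq_or_ne α a with rfl | h
      · simp [Finsupp.notMem_support_iff.mp ha, AddSubgroup.zero_mem]
      · have := hf α
        simpa [Finsupp.add_apply, Finsupp.single_apply, h.symm] using this
    have hb' : b ∈ Ap p1 := by
      have := hf a
      simpa [Finsupp.add_apply, Finsupp.single_apply, Finsupp.notMem_support_iff.mp ha] using this
    have h1 := single_mem_Glam p1 a hb' hp1
    have h2 := ih hrest
    have := AddSubgroup.add_mem _ h1 h2
    simpa using this

end Main

theorem stmt17 (lam : Type*) (p1 p3 p4 p5 : ℕ)
    (hp1 : p1.Prime) (hp3 : p3.Prime) (hp4 : p4.Prime) (hp5 : p5.Prime)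
    (h13 : p1 ≠ p3) (h14 : p1 ≠ p4) (h15 : p1 ≠ p5)
    (h34 : p3 ≠ p4) (h35 : p3 ≠ p5) (h45 : p4 ≠ p5)
    (U : Set lam) :
    Glam lam p1 ≤ GU p1 p3 p4 p5 U ∧
    ∀ q : ℕ, q.Prime → ∀ g ∈ Glam lam p1,
      (∃ y ∈ GU p1 p3 p4 p5 U, q • y = g) → ∃ y ∈ Glam lam p1, q • y = g := by
  constructor
  · apply AddSubgroup.closure_mono
    intro x hx
    exact Or.inl (Or.inl (Or.inl hx))
  · rintro q hq g hg ⟨y, hyGU, hqy⟩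
    obtain ⟨hg1, hg2⟩ := Glam_le_Tlam p1 hp1.ne_zero hg
    -- second component of y is zero
    have hy2 : y.2 = 0 := by
      have h0 : (q : ℚ) • y.2 = 0 := by
        have : (q • y).2 = g.2 := by rw [hqy]
        rw [hg2] at this
        rw [← this]
        simp [Prod.smul_snd]
        ext β
        simp
      have hq0 : (q : ℚ) ≠ 0 := Nat.cast_ne_zero.mpr hq.ne_zero
      exact (smul_eq_zero.mp h0).resolve_left hq0
    -- y is in Tgu with second component 0, so its first coordinates lie in Ap p1
    obtain ⟨c, hc4, hc1, hc35⟩ := GU_le_Tgu p1 p3 p4 p5 hp1.ne_zero hp3.ne_zero hp4.ne_zero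
      hp5.ne_zero U hyGU
    have hc' : ∀ α, c α ∈ Ap p1 := by
      intro α
      have h4 := hc4 α
      have h35' := hc35 α
      rw [hy2] at h35'
      simp only [Finsupp.coe_zero, Pi.zero_apply, zero_sub] at h35'
      have : c α ∈ Ap p3 ⊔ Ap p5 := by simpa using neg_mem h35'
      exact Ap_inter_mem hp3 hp4 hp5 h34 h45 h4 this
    have hy1 : ∀ α, y.1 α ∈ Ap p1 := by
      intro α
      have := add_mem (hc1 α) (hc' α)
      simpa using this
    have hyG : y ∈ Glam lam p1 := by
      have := mem_Glam_of_coords p1 hp1.ne_zero y.1 hy1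
      rwa [show ((y.1, 0) : Msp lam) = y by rw [← hy2]] at this
    exact ⟨y, hyG, hqy⟩
end

section
/- Let G be a torsion-free abelian group satisfying conditions K₂(a) and K₂(b) for distinct primes p₁, p₃, p₄, and let (H_i)_{i∈I} be a nonempty family of pure subgroups of G, each satisfying K₂(a) and K₂(b). Then H := ⋂_{i∈I} H_i also satisfies K₂(a) and K₂(b). (For K₂(b): given g ∈ p₁^ω H, fix i₀ and a witness k, z with z ∈ p₃^ω H_{i₀} and k·g + z ∈ p₄^ω H_{i₀}; then z lies in every H_j by uniqueness in G, so the witness works in H.) -/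
section Divisibility

variable {G : Type*} [AddCommGroup G]

lemma divIn_subset_divSet (p : ℕ) (H : AddSubgroup G) : DivIn p H ⊆ DivSet p G :=
  fun _ hx n => (hx.2 n).imp fun _ hy => hy.2

lemma divIn_mono (p : ℕ) {H K : AddSubgroup G} (hHK : H ≤ K) : DivIn p H ⊆ DivIn p K :=
  fun _ hx => ⟨hHK hx.1, fun n => (hx.2 n).imp fun _ hy => ⟨hHK hy.1, hy.2⟩⟩

lemma nsmul_mem_divSet {p : ℕ} {z : G} (hz : z ∈ DivSet p G) (k : ℕ) : k • z ∈ DivSet p G :=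
  fun n => let ⟨y, hy⟩ := hz n; ⟨k • y, by rw [smul_comm, hy]⟩

end Divisibility

section Purity

variable {G : Type*} [AddCommGroup G] [NoZeroSMulDivisors ℤ G]

lemma IsPure.mem_of_zsmul_mem {H : AddSubgroup G} (hH : IsPure H) {n : ℤ} (hn : n ≠ 0)
    {y : G} (hy : n • y ∈ H) : y ∈ H := by
  obtain ⟨y', hy', h⟩ := hH n (n • y) hy ⟨y, rfl⟩
  exact smul_right_injective G hn h ▸ hy'

lemma IsPure.mem_of_nsmul_mem {H : AddSubgroup G} (hH : IsPure H) {m : ℕ} (hm : m ≠ 0)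
    {y : G} (hy : m • y ∈ H) : y ∈ H :=
  hH.mem_of_zsmul_mem (Int.natCast_ne_zero.mpr hm) (by rwa [natCast_zsmul])

lemma isPure_iInf {I : Type*} {H : I → AddSubgroup G} (hH : ∀ i, IsPure (H i)) :
    IsPure (⨅ i, H i) := by
  intro n x hx ⟨g, hg⟩
  rcases eq_or_ne n 0 with rfl | hn
  · exact ⟨0, zero_mem _, by rw [← hg, zero_smul, zero_smul]⟩
  · refine ⟨g, AddSubgroup.mem_iInf.mpr fun i => (hH i).mem_of_zsmul_mem hn ?_, hg⟩
    exact hg ▸ AddSubgroup.mem_iInf.mp hx i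

lemma IsPure.mem_divIn {H : AddSubgroup G} (hH : IsPure H) {p : ℕ} (hp : p ≠ 0) {x : G}
    (hxH : x ∈ H) (hx : x ∈ DivSet p G) : x ∈ DivIn p H :=
  ⟨hxH, fun n => let ⟨y, hy⟩ := hx n;
    ⟨y, hH.mem_of_nsmul_mem (pow_ne_zero n hp) (hy ▸ hxH), hy⟩⟩

end Purity

namespace K2

variable {G : Type*} [AddCommGroup G] {p1 p3 p4 : ℕ}

lemma unique_divIn (hG : K2 p1 p3 p4 G) (H : AddSubgroup G) :
    ∀ g ∈ DivIn p1 H, ∀ z1 ∈ DivIn p3 H, ∀ z2 ∈ DivIn p3 H,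
      g + z1 ∈ DivIn p4 H → g + z2 ∈ DivIn p4 H → z1 = z2 := by
  intro g hg z1 hz1 z2 hz2 h1 h2
  have hsub (p : ℕ) : DivIn p H ⊆ DivSet p G := divIn_subset_divSet p H
  exact hG.1 g (hsub p1 hg) z1 (hsub p3 hz1) z2 (hsub p3 hz2) (hsub p4 h1) (hsub p4 h2)

lemma nsmul_witness_eq (hG : K2 p1 p3 p4 G) {g z z' : G} {k k' : ℕ}
    (hg : g ∈ DivSet p1 G) (hz : z ∈ DivSet p3 G) (hz' : z' ∈ DivSet p3 G)
    (hkz : k • g + z ∈ DivSet p4 G) (hkz' : k' • g + z' ∈ DivSet p4 G) :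
    k' • z = k • z' := by
  refine hG.1 ((k' * k) • g) (nsmul_mem_divSet hg _) _ (nsmul_mem_divSet hz k')
    _ (nsmul_mem_divSet hz' k) ?_ ?_
  · rw [mul_nsmul', ← smul_add]
    exact nsmul_mem_divSet hkz k'
  · rw [mul_comm, mul_nsmul', ← smul_add]
    exact nsmul_mem_divSet hkz' k

end K2

theorem stmt19_general {G : Type*} [AddCommGroup G] [NoZeroSMulDivisors ℤ G]
    (p1 p3 p4 : ℕ) (hp3 : p3.Prime) (hp4 : p4.Prime)
    (hG : K2 p1 p3 p4 G)
    {I : Type*} [Nonempty I] (H : I → AddSubgroup G)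
    (hpure : ∀ i, IsPure (H i))
    (hHi : ∀ i, K2In p1 p3 p4 (H i)) :
    K2In p1 p3 p4 (⨅ i, H i) := by
  refine ⟨hG.unique_divIn _, fun g hg => ?_⟩
  have hgH : ∀ j, g ∈ DivIn p1 (H j) := fun j => divIn_mono p1 (iInf_le H j) hg
  obtain ⟨i₀⟩ := ‹Nonempty I›
  obtain ⟨k, hk, z, hz, hkz⟩ := (hHi i₀).2 g (hgH i₀)
  have hzH : z ∈ ⨅ j, H j := AddSubgroup.mem_iInf.mpr fun j => by
    obtain ⟨k', hk', z', hz', hkz'⟩ := (hHi j).2 g (hgH j)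
    have hzz' := hG.nsmul_witness_eq (divIn_subset_divSet p1 _ hg) (divIn_subset_divSet p3 _ hz)
      (divIn_subset_divSet p3 _ hz') (divIn_subset_divSet p4 _ hkz)
      (divIn_subset_divSet p4 _ hkz')
    exact (hpure j).mem_of_nsmul_mem hk'.ne' (hzz' ▸ (H j).nsmul_mem hz'.1 k)
  have hpureI := isPure_iInf hpure
  exact ⟨k, hk, z, hpureI.mem_divIn hp3.ne_zero hzH (divIn_subset_divSet p3 _ hz),
    hpureI.mem_divIn hp4.ne_zero (add_mem (nsmul_mem hg.1 k) hzH)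
      (divIn_subset_divSet p4 _ hkz)⟩

theorem stmt19 {G : Type*} [AddCommGroup G] [NoZeroSMulDivisors ℤ G]
    (p1 p3 p4 : ℕ) (hp1 : p1.Prime) (hp3 : p3.Prime) (hp4 : p4.Prime)
    (h13 : p1 ≠ p3) (h14 : p1 ≠ p4) (h34 : p3 ≠ p4)
    (hG : K2 p1 p3 p4 G)
    {I : Type*} [Nonempty I] (H : I → AddSubgroup G)
    (hpure : ∀ i, IsPure (H i))
    (hHi : ∀ i, K2In p1 p3 p4 (H i)) :
    K2In p1 p3 p4 (⨅ i, H i) :=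
  stmt19_general p1 p3 p4 hp3 hp4 hG H hpure hHi
end
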